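/- If (Q_1, Q_2) is a 2-colouring of the hypergraph (Q, S), then the sets W(c_1) = {v}, W(c_2) = {u_1}, W(c_3) = {S_1,...,S_n} ∪ Q_1 ∪ Q', W(c_4) = {S_1',...,S_n'} ∪ Q_2, W(c_5) = {w} and W(c_6) = {x} form a C_6-witness structure of the graph G'. -/

import Mathlib

/-- `W` is an `H`-witness structure of `G`: a family of pairwise disjoint nonempty
connected subsets of `V(G)` covering `V(G)` such that distinct `h₁ h₂` are adjacent in `H`
iff there is an edge of `G` between `W h₁` and `W h₂`. -/
def IsWitnessStructure {V U : Type*} (G : SimpleGraph V) (H : SimpleGraph U)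
    (W : U → Set V) : Prop :=
  (∀ h, (W h).Nonempty) ∧
  (∀ h₁ h₂, h₁ ≠ h₂ → Disjoint (W h₁) (W h₂)) ∧
  (⋃ h, W h) = Set.univ ∧
  (∀ h, (G.induce (W h)).Connected) ∧
  (∀ h₁ h₂, h₁ ≠ h₂ → ((∃ a ∈ W h₁, ∃ b ∈ W h₂, G.Adj a b) ↔ H.Adj h₁ h₂))

/-- `G` contains `H` as a contraction. -/
def ContainsAsContraction {V U : Type*} (G : SimpleGraph V) (H : SimpleGraph U) : Prop :=
  ∃ W : U → Set V, IsWitnessStructure G H W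

/-- Raw vertex names for the graph `G'`: `G(Q,S)` with `q*` and `u₂` deleted and a new
vertex `x` added (adjacent to `v` and `w`). -/
inductive HVertex' (m n : ℕ) : Type
  | elt : Fin m → HVertex' m n
  | hyp : Fin n → HVertex' m n
  | copy : Fin n → HVertex' m n
  | sub : Fin m → Fin n → HVertex' m n
  | u1 : HVertex' m n
  | x : HVertex' m n
  | v : HVertex' m n
  | w : HVertex' m n

/-- A raw vertex name is an actual vertex of `G'`: the subdivision vertex `q^i_j`
exists only when `q_i ∈ S_j`. -/
def HVertex'.OK {m n : ℕ} (S : Fin n → Set (Fin m)) : HVertex' m n → Prop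
  | .sub i j => i ∈ S j
  | _ => True

/-- The vertex set of `G'`. -/
def GVertex' {m n : ℕ} (S : Fin n → Set (Fin m)) : Type := {y : HVertex' m n // y.OK S}

/-- The (asymmetrically listed) edges of `G'`:
`q^i_j q_i`, `q^i_j S_j`, `q_i S_j'` (for `q_i ∈ S_j`), `S_j S_k'` (all `j,k`),
`u₁ S_j`, `u₁ v`, `x v`, `x w`, `w S_j'`. -/
def baseAdj' {m n : ℕ} (S : Fin n → Set (Fin m)) : HVertex' m n → HVertex' m n → Prop
  | .sub i _, .elt i' => i = i'
  | .sub _ j, .hyp j' => j = j'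
  | .elt i, .copy j => i ∈ S j
  | .hyp _, .copy _ => True
  | .u1, .hyp _ => True
  | .u1, .v => True
  | .x, .v => True
  | .x, .w => True
  | .w, .copy _ => True
  | _, _ => False

/-- The graph `G'`. -/
def GQS' {m n : ℕ} (S : Fin n → Set (Fin m)) : SimpleGraph (GVertex' S) :=
  SimpleGraph.fromRel (fun a b => baseAdj' S a.1 b.1)

/-- `(Q₁, Q₂)` is a 2-colouring of the hypergraph `(Q, S)`: a partition of `Q` such that
every hyperedge meets both parts. -/
def IsTwoColouring {m n : ℕ} (S : Fin n → Set (Fin m)) (Q₁ Q₂ : Set (Fin m)) : Prop :=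
  Q₁ ∪ Q₂ = Set.univ ∧ Disjoint Q₁ Q₂ ∧ ∀ j, (Q₁ ∩ S j).Nonempty ∧ (Q₂ ∩ S j).Nonempty

/- ===== auxiliary lemmas ===== -/

lemma stmt16_adj_iff {m n : ℕ} {S : Fin n → Set (Fin m)} {a b : GVertex' S} :
    (GQS' S).Adj a b ↔ a.1 ≠ b.1 ∧ (baseAdj' S a.1 b.1 ∨ baseAdj' S b.1 a.1) := by
  rw [GQS', SimpleGraph.fromRel_adj, Ne, Ne]; exact and_congr_left' (not_congr Subtype.ext_iff)

lemma stmt16_hub {V : Type*} (G : SimpleGraph V) (s : Set V) (a : V) (ha : a ∈ s)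
    (h : ∀ z : s, (G.induce s).Reachable z ⟨a, ha⟩) : (G.induce s).Connected := by
  rw [SimpleGraph.connected_iff]
  exact ⟨fun u v => (h u).trans (h v).symm, ⟨⟨a, ha⟩⟩⟩

lemma stmt16_single {V : Type*} (G : SimpleGraph V) (a : V) :
    (G.induce {a}).Connected := by
  refine stmt16_hub G {a} a rfl ?_
  rintro ⟨z, rfl⟩
  exact SimpleGraph.Reachable.refl _

lemma stmt16_step {V : Type*} (G : SimpleGraph V) (s : Set V) (a b : V)
    (ha : a ∈ s) (hb : b ∈ s) (h : G.Adj a b) :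
    (G.induce s).Reachable ⟨a, ha⟩ ⟨b, hb⟩ :=
  SimpleGraph.Adj.reachable h

theorem stmt_16 {m n : ℕ} (S : Fin n → Set (Fin m)) (hn : 2 ≤ n)
    (hSne : ∀ j, (S j).Nonempty) (hSlast : S ⟨n - 1, by omega⟩ = Set.univ) (Q₁ Q₂ : Set (Fin m)) (hcol : IsTwoColouring S Q₁ Q₂) :
    IsWitnessStructure (GQS' S) (SimpleGraph.cycleGraph 6)
      ![ {(⟨.v, trivial⟩ : GVertex' S)},
         {(⟨.u1, trivial⟩ : GVertex' S)},
         {z : GVertex' S | (∃ j, z.1 = .hyp j) ∨ (∃ i ∈ Q₁, z.1 = .elt i) ∨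
            (∃ i j, z.1 = .sub i j)},
         {z : GVertex' S | (∃ j, z.1 = .copy j) ∨ (∃ i ∈ Q₂, z.1 = .elt i)},
         {(⟨.w, trivial⟩ : GVertex' S)},
         {(⟨.x, trivial⟩ : GVertex' S)} ] := by
  obtain ⟨hQu, hQd, hQm⟩ := hcol
  have h2 : ∀ i, i ∉ Q₁ → i ∈ Q₂ := by
    intro i hi
    have hu : i ∈ Q₁ ∪ Q₂ := hQu ▸ Set.mem_univ i
    rcases hu with h | h
    · exact absurd h hi
    · exact h
  have hjl : n - 1 < n := by omega
  set jl : Fin n := ⟨n - 1, hjl⟩ with hjldef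
  have hlast : ∀ i : Fin m, i ∈ S jl := fun i => hSlast ▸ Set.mem_univ i
  refine ⟨?_, ?_, ?_, ?_, ?_⟩
  · -- nonempty
    intro h
    fin_cases h
    · exact ⟨_, rfl⟩
    · exact ⟨_, rfl⟩
    · exact ⟨⟨.hyp jl, trivial⟩, Or.inl ⟨jl, rfl⟩⟩
    · exact ⟨⟨.copy jl, trivial⟩, Or.inl ⟨jl, rfl⟩⟩
    · exact ⟨_, rfl⟩
    · exact ⟨_, rfl⟩
  · -- disjoint
    intro h₁ h₂ hne
    rw [Set.disjoint_left]
    intro z hz1 hz2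
    have key : ∀ k : Fin 6,
        z ∈ (![ {(⟨.v, trivial⟩ : GVertex' S)},
         {(⟨.u1, trivial⟩ : GVertex' S)},
         {z : GVertex' S | (∃ j, z.1 = .hyp j) ∨ (∃ i ∈ Q₁, z.1 = .elt i) ∨
            (∃ i j, z.1 = .sub i j)},
         {z : GVertex' S | (∃ j, z.1 = .copy j) ∨ (∃ i ∈ Q₂, z.1 = .elt i)},
         {(⟨.w, trivial⟩ : GVertex' S)},
         {(⟨.x, trivial⟩ : GVertex' S)} ] : Fin 6 → Set (GVertex' S)) k →
        (k = 0 ∧ z.1 = .v) ∨ (k = 1 ∧ z.1 = .u1) ∨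
        (k = 2 ∧ ((∃ j, z.1 = .hyp j) ∨ (∃ i ∈ Q₁, z.1 = .elt i) ∨
            (∃ i j, z.1 = .sub i j))) ∨
        (k = 3 ∧ ((∃ j, z.1 = .copy j) ∨ (∃ i ∈ Q₂, z.1 = .elt i))) ∨
        (k = 4 ∧ z.1 = .w) ∨ (k = 5 ∧ z.1 = .x) := by
      intro k hk
      fin_cases k
      · exact Or.inl ⟨rfl, congrArg Subtype.val (show z = ⟨.v, trivial⟩ from hk)⟩
      · exact Or.inr (Or.inl ⟨rfl, congrArg Subtype.val (show z = ⟨.u1, trivial⟩ from hk)⟩)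
      · exact Or.inr (Or.inr (Or.inl ⟨rfl, hk⟩))
      · exact Or.inr (Or.inr (Or.inr (Or.inl ⟨rfl, hk⟩)))
      · exact Or.inr (Or.inr (Or.inr (Or.inr (Or.inl
          ⟨rfl, congrArg Subtype.val (show z = ⟨.w, trivial⟩ from hk)⟩))))
      · exact Or.inr (Or.inr (Or.inr (Or.inr (Or.inr
          ⟨rfl, congrArg Subtype.val (show z = ⟨.x, trivial⟩ from hk)⟩))))
    rcases key h₁ hz1 with ⟨rfl,d1⟩|⟨rfl,d1⟩|⟨rfl,d1⟩|⟨rfl,d1⟩|⟨rfl,d1⟩|⟨rfl,d1⟩ <;>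
      rcases key h₂ hz2 with ⟨rfl,d2⟩|⟨rfl,d2⟩|⟨rfl,d2⟩|⟨rfl,d2⟩|⟨rfl,d2⟩|⟨rfl,d2⟩ <;>
      first
        | exact hne rfl
        | exact nomatch (d1.symm.trans d2)
        | (rcases d2 with ⟨j, e⟩ | ⟨i, hi, e⟩ | ⟨i, j, e⟩ <;>
            exact nomatch (e.symm.trans d1))
        | (rcases d2 with ⟨j, e⟩ | ⟨i, hi, e⟩ <;>
            exact nomatch (e.symm.trans d1))
        | (rcases d1 with ⟨j, e⟩ | ⟨i, hi, e⟩ | ⟨i, j, e⟩ <;>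
            exact nomatch (e.symm.trans d2))
        | (rcases d1 with ⟨j, e⟩ | ⟨i, hi, e⟩ <;>
            exact nomatch (e.symm.trans d2))
        | (rcases d1 with ⟨j, e1⟩ | ⟨i, hi, e1⟩ | ⟨i, j, e1⟩ <;>
            rcases d2 with ⟨k, e2⟩ | ⟨i', hi', e2⟩ <;>
            first
              | simpa using e1.symm.trans e2
              | (injection e1.symm.trans e2 with e; subst e;
                 exact Set.disjoint_left.mp hQd hi hi'))
        | (rcases d2 with ⟨j, e1⟩ | ⟨i, hi, e1⟩ | ⟨i, j, e1⟩ <;>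
            rcases d1 with ⟨k, e2⟩ | ⟨i', hi', e2⟩ <;>
            first
              | simpa using e1.symm.trans e2
              | (injection e1.symm.trans e2 with e; subst e;
                 exact Set.disjoint_left.mp hQd hi hi'))
  · -- union
    ext z
    simp only [Set.mem_univ, iff_true, Set.mem_iUnion]
    obtain ⟨y, hy⟩ := z
    cases y with
    | elt i =>
      by_cases hi : i ∈ Q₁
      · exact ⟨2, Or.inr (Or.inl ⟨i, hi, rfl⟩)⟩
      · exact ⟨3, Or.inr ⟨i, h2 i hi, rfl⟩⟩
    | hyp j => exact ⟨2, Or.inl ⟨j, rfl⟩⟩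
    | copy j => exact ⟨3, Or.inl ⟨j, rfl⟩⟩
    | sub i j => exact ⟨2, Or.inr (Or.inr ⟨i, j, rfl⟩)⟩
    | u1 => exact ⟨1, rfl⟩
    | x => exact ⟨5, rfl⟩
    | v => exact ⟨0, rfl⟩
    | w => exact ⟨4, rfl⟩
  · -- connectivity
    intro h
    fin_cases h
    · exact stmt16_single _ _
    · exact stmt16_single _ _
    · -- W c3
      refine stmt16_hub (GQS' S) _ ⟨.hyp jl, trivial⟩ (Or.inl ⟨jl, rfl⟩) ?_
      set s : Set (GVertex' S) :=
        {z : GVertex' S | (∃ j, z.1 = .hyp j) ∨ (∃ i ∈ Q₁, z.1 = .elt i) ∨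
            (∃ i j, z.1 = .sub i j)} with hs
      -- reach from elt i (i ∈ Q₁)
      have reach_elt : ∀ i (hi : i ∈ Q₁),
          ((GQS' S).induce s).Reachable ⟨⟨.elt i, trivial⟩, Or.inr (Or.inl ⟨i, hi, rfl⟩)⟩
            ⟨⟨.hyp jl, trivial⟩, Or.inl ⟨jl, rfl⟩⟩ := by
        intro i hi
        refine (stmt16_step (GQS' S) s ⟨.elt i, trivial⟩ ⟨.sub i jl, hlast i⟩
          (Or.inr (Or.inl ⟨i, hi, rfl⟩)) (Or.inr (Or.inr ⟨i, jl, rfl⟩))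
          (stmt16_adj_iff.mpr ⟨by simp, Or.inr rfl⟩)).trans ?_
        exact stmt16_step (GQS' S) s ⟨.sub i jl, hlast i⟩ ⟨.hyp jl, trivial⟩
          (Or.inr (Or.inr ⟨i, jl, rfl⟩)) (Or.inl ⟨jl, rfl⟩)
          (stmt16_adj_iff.mpr ⟨by simp, Or.inl rfl⟩)
      have reach_hyp : ∀ j,
          ((GQS' S).induce s).Reachable ⟨⟨.hyp j, trivial⟩, Or.inl ⟨j, rfl⟩⟩
            ⟨⟨.hyp jl, trivial⟩, Or.inl ⟨jl, rfl⟩⟩ := by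
        intro j
        obtain ⟨i, hi1, hiS⟩ := (hQm j).1
        refine SimpleGraph.Reachable.trans ?_ (reach_elt i hi1)
        refine (stmt16_step (GQS' S) s ⟨.hyp j, trivial⟩ ⟨.sub i j, hiS⟩
          (Or.inl ⟨j, rfl⟩) (Or.inr (Or.inr ⟨i, j, rfl⟩))
          (stmt16_adj_iff.mpr ⟨by simp, Or.inr rfl⟩)).trans ?_
        exact stmt16_step (GQS' S) s ⟨.sub i j, hiS⟩ ⟨.elt i, trivial⟩
          (Or.inr (Or.inr ⟨i, j, rfl⟩)) (Or.inr (Or.inl ⟨i, hi1, rfl⟩))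
          (stmt16_adj_iff.mpr ⟨by simp, Or.inl rfl⟩)
      rintro ⟨⟨y, hy⟩, hmem⟩
      rcases hmem with ⟨j, e⟩ | ⟨i, hi, e⟩ | ⟨i, j, e⟩ <;> simp only at e <;> subst e
      · exact reach_hyp j
      · exact reach_elt i hi
      · refine SimpleGraph.Reachable.trans ?_ (reach_hyp j)
        exact stmt16_step (GQS' S) s ⟨.sub i j, hy⟩ ⟨.hyp j, trivial⟩
          (Or.inr (Or.inr ⟨i, j, rfl⟩)) (Or.inl ⟨j, rfl⟩)
          (stmt16_adj_iff.mpr ⟨by simp, Or.inl rfl⟩)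
    · -- W c4
      refine stmt16_hub (GQS' S) _ ⟨.copy jl, trivial⟩ (Or.inl ⟨jl, rfl⟩) ?_
      set s : Set (GVertex' S) :=
        {z : GVertex' S | (∃ j, z.1 = .copy j) ∨ (∃ i ∈ Q₂, z.1 = .elt i)} with hs
      have reach_elt : ∀ i (hi : i ∈ Q₂),
          ((GQS' S).induce s).Reachable ⟨⟨.elt i, trivial⟩, Or.inr ⟨i, hi, rfl⟩⟩
            ⟨⟨.copy jl, trivial⟩, Or.inl ⟨jl, rfl⟩⟩ := by
        intro i hi
        exact stmt16_step (GQS' S) s ⟨.elt i, trivial⟩ ⟨.copy jl, trivial⟩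
          (Or.inr ⟨i, hi, rfl⟩) (Or.inl ⟨jl, rfl⟩)
          (stmt16_adj_iff.mpr ⟨by simp, Or.inl (hlast i)⟩)
      rintro ⟨⟨y, hy⟩, hmem⟩
      rcases hmem with ⟨j, e⟩ | ⟨i, hi, e⟩ <;> simp only at e <;> subst e
      · obtain ⟨i, hi2, hiS⟩ := (hQm j).2
        refine SimpleGraph.Reachable.trans ?_ (reach_elt i hi2)
        exact (stmt16_step (GQS' S) s ⟨.copy j, trivial⟩ ⟨.elt i, trivial⟩
          (Or.inl ⟨j, rfl⟩) (Or.inr ⟨i, hi2, rfl⟩)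
          (stmt16_adj_iff.mpr ⟨by simp, Or.inr hiS⟩))
      · exact reach_elt i hi
    · exact stmt16_single _ _
    · exact stmt16_single _ _
  · -- edges iff
    intro h₁ h₂ hne
    fin_cases h₁ <;> fin_cases h₂
    -- (0,0)
    · exact absurd rfl hne
    -- (0,1) adjacent
    · exact iff_of_true ⟨⟨.v, trivial⟩, rfl, ⟨.u1, trivial⟩, rfl,
        stmt16_adj_iff.mpr ⟨by simp, Or.inr trivial⟩⟩ (by decide)
    -- (0,2)
    · refine iff_of_false ?_ (by decide)
      rintro ⟨a, rfl, b, (⟨j, eb⟩ | ⟨i, hi, eb⟩ | ⟨i, j, eb⟩), hab⟩ <;>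
        rcases stmt16_adj_iff.mp hab with ⟨-, h | h⟩ <;> rw [eb] at h <;> exact h
    -- (0,3)
    · refine iff_of_false ?_ (by decide)
      rintro ⟨a, rfl, b, (⟨j, eb⟩ | ⟨i, hi, eb⟩), hab⟩ <;>
        rcases stmt16_adj_iff.mp hab with ⟨-, h | h⟩ <;> rw [eb] at h <;> exact h
    -- (0,4)
    · refine iff_of_false ?_ (by decide)
      rintro ⟨a, rfl, b, rfl, hab⟩
      rcases stmt16_adj_iff.mp hab with ⟨-, h | h⟩ <;> exact h
    -- (0,5) adjacent
    · exact iff_of_true ⟨⟨.v, trivial⟩, rfl, ⟨.x, trivial⟩, rfl,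
        stmt16_adj_iff.mpr ⟨by simp, Or.inr trivial⟩⟩ (by decide)
    -- (1,0) adjacent
    · exact iff_of_true ⟨⟨.u1, trivial⟩, rfl, ⟨.v, trivial⟩, rfl,
        stmt16_adj_iff.mpr ⟨by simp, Or.inl trivial⟩⟩ (by decide)
    -- (1,1)
    · exact absurd rfl hne
    -- (1,2) adjacent
    · exact iff_of_true ⟨⟨.u1, trivial⟩, rfl, ⟨.hyp jl, trivial⟩, Or.inl ⟨jl, rfl⟩,
        stmt16_adj_iff.mpr ⟨by simp, Or.inl trivial⟩⟩ (by decide)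
    -- (1,3)
    · refine iff_of_false ?_ (by decide)
      rintro ⟨a, rfl, b, (⟨j, eb⟩ | ⟨i, hi, eb⟩), hab⟩ <;>
        rcases stmt16_adj_iff.mp hab with ⟨-, h | h⟩ <;> rw [eb] at h <;> exact h
    -- (1,4)
    · refine iff_of_false ?_ (by decide)
      rintro ⟨a, rfl, b, rfl, hab⟩
      rcases stmt16_adj_iff.mp hab with ⟨-, h | h⟩ <;> exact h
    -- (1,5)
    · refine iff_of_false ?_ (by decide)
      rintro ⟨a, rfl, b, rfl, hab⟩
      rcases stmt16_adj_iff.mp hab with ⟨-, h | h⟩ <;> exact h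
    -- (2,0)
    · refine iff_of_false ?_ (by decide)
      rintro ⟨a, (⟨j, ea⟩ | ⟨i, hi, ea⟩ | ⟨i, j, ea⟩), b, rfl, hab⟩ <;>
        rcases stmt16_adj_iff.mp hab with ⟨-, h | h⟩ <;> rw [ea] at h <;> exact h
    -- (2,1) adjacent
    · exact iff_of_true ⟨⟨.hyp jl, trivial⟩, Or.inl ⟨jl, rfl⟩, ⟨.u1, trivial⟩, rfl,
        stmt16_adj_iff.mpr ⟨by simp, Or.inr trivial⟩⟩ (by decide)
    -- (2,2)
    · exact absurd rfl hne
    -- (2,3) adjacent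
    · exact iff_of_true ⟨⟨.hyp jl, trivial⟩, Or.inl ⟨jl, rfl⟩,
        ⟨.copy jl, trivial⟩, Or.inl ⟨jl, rfl⟩,
        stmt16_adj_iff.mpr ⟨by simp, Or.inl trivial⟩⟩ (by decide)
    -- (2,4)
    · refine iff_of_false ?_ (by decide)
      rintro ⟨a, (⟨j, ea⟩ | ⟨i, hi, ea⟩ | ⟨i, j, ea⟩), b, rfl, hab⟩ <;>
        rcases stmt16_adj_iff.mp hab with ⟨-, h | h⟩ <;> rw [ea] at h <;> exact h
    -- (2,5)
    · refine iff_of_false ?_ (by decide)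
      rintro ⟨a, (⟨j, ea⟩ | ⟨i, hi, ea⟩ | ⟨i, j, ea⟩), b, rfl, hab⟩ <;>
        rcases stmt16_adj_iff.mp hab with ⟨-, h | h⟩ <;> rw [ea] at h <;> exact h
    -- (3,0)
    · refine iff_of_false ?_ (by decide)
      rintro ⟨a, (⟨j, ea⟩ | ⟨i, hi, ea⟩), b, rfl, hab⟩ <;>
        rcases stmt16_adj_iff.mp hab with ⟨-, h | h⟩ <;> rw [ea] at h <;> exact h
    -- (3,1)
    · refine iff_of_false ?_ (by decide)
      rintro ⟨a, (⟨j, ea⟩ | ⟨i, hi, ea⟩), b, rfl, hab⟩ <;>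
        rcases stmt16_adj_iff.mp hab with ⟨-, h | h⟩ <;> rw [ea] at h <;> exact h
    -- (3,2) adjacent
    · exact iff_of_true ⟨⟨.copy jl, trivial⟩, Or.inl ⟨jl, rfl⟩,
        ⟨.hyp jl, trivial⟩, Or.inl ⟨jl, rfl⟩,
        stmt16_adj_iff.mpr ⟨by simp, Or.inr trivial⟩⟩ (by decide)
    -- (3,3)
    · exact absurd rfl hne
    -- (3,4) adjacent
    · exact iff_of_true ⟨⟨.copy jl, trivial⟩, Or.inl ⟨jl, rfl⟩, ⟨.w, trivial⟩, rfl,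
        stmt16_adj_iff.mpr ⟨by simp, Or.inr trivial⟩⟩ (by decide)
    -- (3,5)
    · refine iff_of_false ?_ (by decide)
      rintro ⟨a, (⟨j, ea⟩ | ⟨i, hi, ea⟩), b, rfl, hab⟩ <;>
        rcases stmt16_adj_iff.mp hab with ⟨-, h | h⟩ <;> rw [ea] at h <;> exact h
    -- (4,0)
    · refine iff_of_false ?_ (by decide)
      rintro ⟨a, rfl, b, rfl, hab⟩
      rcases stmt16_adj_iff.mp hab with ⟨-, h | h⟩ <;> exact h
    -- (4,1)
    · refine iff_of_false ?_ (by decide)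
      rintro ⟨a, rfl, b, rfl, hab⟩
      rcases stmt16_adj_iff.mp hab with ⟨-, h | h⟩ <;> exact h
    -- (4,2)
    · refine iff_of_false ?_ (by decide)
      rintro ⟨a, rfl, b, (⟨j, eb⟩ | ⟨i, hi, eb⟩ | ⟨i, j, eb⟩), hab⟩ <;>
        rcases stmt16_adj_iff.mp hab with ⟨-, h | h⟩ <;> rw [eb] at h <;> exact h
    -- (4,3) adjacent
    · exact iff_of_true ⟨⟨.w, trivial⟩, rfl, ⟨.copy jl, trivial⟩, Or.inl ⟨jl, rfl⟩,
        stmt16_adj_iff.mpr ⟨by simp, Or.inl trivial⟩⟩ (by decide)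
    -- (4,4)
    · exact absurd rfl hne
    -- (4,5) adjacent
    · exact iff_of_true ⟨⟨.w, trivial⟩, rfl, ⟨.x, trivial⟩, rfl,
        stmt16_adj_iff.mpr ⟨by simp, Or.inr trivial⟩⟩ (by decide)
    -- (5,0) adjacent
    · exact iff_of_true ⟨⟨.x, trivial⟩, rfl, ⟨.v, trivial⟩, rfl,
        stmt16_adj_iff.mpr ⟨by simp, Or.inl trivial⟩⟩ (by decide)
    -- (5,1)
    · refine iff_of_false ?_ (by decide)
      rintro ⟨a, rfl, b, rfl, hab⟩
      rcases stmt16_adj_iff.mp hab with ⟨-, h | h⟩ <;> exact h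
    -- (5,2)
    · refine iff_of_false ?_ (by decide)
      rintro ⟨a, rfl, b, (⟨j, eb⟩ | ⟨i, hi, eb⟩ | ⟨i, j, eb⟩), hab⟩ <;>
        rcases stmt16_adj_iff.mp hab with ⟨-, h | h⟩ <;> rw [eb] at h <;> exact h
    -- (5,3)
    · refine iff_of_false ?_ (by decide)
      rintro ⟨a, rfl, b, (⟨j, eb⟩ | ⟨i, hi, eb⟩), hab⟩ <;>
        rcases stmt16_adj_iff.mp hab with ⟨-, h | h⟩ <;> rw [eb] at h <;> exact h
    -- (5,4) adjacent
    · exact iff_of_true ⟨⟨.x, trivial⟩, rfl, ⟨.w, trivial⟩, rfl,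
        stmt16_adj_iff.mpr ⟨by simp, Or.inl trivial⟩⟩ (by decide)
    -- (5,5)
    · exact absurd rfl hne
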